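/- (Uniqueness of the paramagnetic solution of the HHM self-consistency equations above the mean-field critical temperature.) Let p ≥ 1, σ ∈ (1/2,1), β > 0 and suppose β C_{2σ−1} < 1 (i.e. β < β_c^{MF} = C_{2σ−1}^{−1}). If m ∈ ℝ^p satisfies, for every μ ∈ {1,…,p}, m_μ = 2^{−p} Σ_{ξ∈{−1,1}^p} ξ_μ tanh(β C_{2σ−1} Σ_{ν=1}^p m_ν ξ_ν), then m = 0. -/

import Mathlib

open Real

/-- The ±1 value of a Boolean spin. -/
noncomputable def spin (b : Bool) : ℝ := if b then 1 else -1

/-- The constant `C_y = 2^{-y} / (1 - 2^{-y})`. -/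
noncomputable def Cconst (y : ℝ) : ℝ := (2 : ℝ) ^ (-y) / (1 - (2 : ℝ) ^ (-y))

lemma spin_not (b : Bool) : spin (!b) = -spin b := by cases b <;> simp [spin]

lemma abs_spin (b : Bool) : |spin b| = 1 := by cases b <;> simp [spin]

lemma tanh_hasDerivAt (x : ℝ) : HasDerivAt Real.tanh (1 / Real.cosh x ^ 2) x := by
  have h := (Real.hasDerivAt_sinh x).div (Real.hasDerivAt_cosh x) (Real.cosh_pos x).ne'
  have heq2 : (Real.cosh x * Real.cosh x - Real.sinh x * Real.sinh x) / Real.cosh x ^ 2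
      = 1 / Real.cosh x ^ 2 := by
    have h1 := Real.cosh_sq_sub_sinh_sq x
    rw [show Real.cosh x * Real.cosh x - Real.sinh x * Real.sinh x
        = Real.cosh x ^ 2 - Real.sinh x ^ 2 by ring, h1]
  rw [heq2] at h
  have heq : (fun y => Real.sinh y / Real.cosh y) = Real.tanh := by
    funext y; rw [Real.tanh_eq_sinh_div_cosh]
  rw [← heq]; exact h

lemma tanh_lipschitz (a b : ℝ) : |Real.tanh a - Real.tanh b| ≤ |a - b| := by
  have h := (convex_univ (𝕜 := ℝ) (E := ℝ)).norm_image_sub_le_of_norm_hasDerivWithin_le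
    (f := Real.tanh) (f' := fun x => 1 / Real.cosh x ^ 2) (C := 1)
    (fun x _ => (tanh_hasDerivAt x).hasDerivWithinAt)
    (fun x _ => by
      rw [Real.norm_eq_abs, abs_of_nonneg (by positivity)]
      rw [div_le_one (by positivity)]
      nlinarith [Real.one_le_cosh x])
    (Set.mem_univ b) (Set.mem_univ a)
  simpa [Real.norm_eq_abs] using h

/-- uniqueness of the paramagnetic solution of the HHM zero-field
self-consistency equations above the mean-field critical temperature. -/
theorem hopfield_paramagnetic_uniqueness (p : ℕ) (hp : 1 ≤ p) (σ β : ℝ)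
    (hσ : σ ∈ Set.Ioo (1 / 2 : ℝ) 1) (hβ : 0 < β)
    (hcrit : β * Cconst (2 * σ - 1) < 1) (m : Fin p → ℝ)
    (hm : ∀ μ, m μ = ((2 : ℝ) ^ p)⁻¹ *
      ∑ ξ : Fin p → Bool,
        spin (ξ μ) * Real.tanh (β * Cconst (2 * σ - 1) * ∑ ν, m ν * spin (ξ ν))) :
    m = 0 := by
  have hCpos : 0 < Cconst (2 * σ - 1) := by
    unfold Cconst
    have h2y : (2 : ℝ) ^ (-(2 * σ - 1)) < 1 :=
      Real.rpow_lt_one_of_one_lt_of_neg one_lt_two (by linarith [hσ.1])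
    exact div_pos (Real.rpow_pos_of_pos two_pos _) (by linarith)
  set c : ℝ := β * Cconst (2 * σ - 1) with hc
  have hc0 : 0 ≤ c := le_of_lt (mul_pos hβ hCpos)
  funext μ
  show m μ = 0
  set S : (Fin p → Bool) → ℝ := fun ξ => ∑ ν, m ν * spin (ξ ν) with hS
  set g : (Fin p → Bool) → ℝ := fun ξ => spin (ξ μ) * Real.tanh (c * S ξ) with hg
  set f : (Fin p → Bool) → (Fin p → Bool) := fun ξ => Function.update ξ μ (!ξ μ) with hf
  have hfμ : ∀ ξ, f ξ μ = !ξ μ := fun ξ => by simp [hf]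
  have hfν : ∀ ξ ν, ν ≠ μ → f ξ ν = ξ ν := fun ξ ν h => by
    simp [hf, Function.update_apply, h]
  have hinv : Function.Involutive f := by
    intro ξ; funext ν
    by_cases h : ν = μ
    · subst h; rw [hfμ, hfμ, Bool.not_not]
    · rw [hfν _ _ h, hfν _ _ h]
  have hSf : ∀ ξ, S (f ξ) = S ξ - 2 * m μ * spin (ξ μ) := by
    intro ξ
    have hdiff : S (f ξ) - S ξ = ∑ ν, (m ν * spin (f ξ ν) - m ν * spin (ξ ν)) := by
      rw [Finset.sum_sub_distrib]
    have hsingle : ∑ ν, (m ν * spin (f ξ ν) - m ν * spin (ξ ν))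
        = m μ * spin (f ξ μ) - m μ * spin (ξ μ) := by
      apply Finset.sum_eq_single
      · intro ν _ h; rw [hfν _ _ h]; ring
      · intro h; exact absurd (Finset.mem_univ μ) h
    rw [hsingle, hfμ, spin_not] at hdiff
    linarith [hdiff]
  -- m μ expressed two ways
  have h1 : m μ = ((2 : ℝ) ^ p)⁻¹ * ∑ ξ, g ξ := hm μ
  have h2 : (∑ ξ, g ξ) = ∑ ξ, g (f ξ) :=
    (Fintype.sum_bijective f hinv.bijective (fun ξ => g (f ξ)) g (fun _ => rfl)).symm
  have hgf : ∀ ξ, g (f ξ) = -(spin (ξ μ) * Real.tanh (c * (S ξ - 2 * m μ * spin (ξ μ)))) := by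
    intro ξ
    rw [hg]
    simp only [hfμ, hSf, spin_not]
    ring
  -- the key identity: 2 m μ = avg of differences
  have hkey : 2 * m μ = ((2 : ℝ) ^ p)⁻¹ *
      ∑ ξ, spin (ξ μ) * (Real.tanh (c * S ξ)
        - Real.tanh (c * (S ξ - 2 * m μ * spin (ξ μ)))) := by
    have h3 : m μ = ((2 : ℝ) ^ p)⁻¹ * ∑ ξ, g (f ξ) := by rw [h1, h2]
    have hsum : 2 * m μ = ((2 : ℝ) ^ p)⁻¹ * (∑ ξ, g ξ + ∑ ξ, g (f ξ)) := by
      rw [mul_add, ← h1, ← h3]; ring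
    have hsum2 : ∑ ξ, (g ξ + g (f ξ)) = ∑ ξ, spin (ξ μ) * (Real.tanh (c * S ξ)
        - Real.tanh (c * (S ξ - 2 * m μ * spin (ξ μ)))) := by
      apply Finset.sum_congr rfl
      intro ξ _
      rw [hgf ξ]
      show spin (ξ μ) * Real.tanh (c * S ξ) + _ = _
      ring
    rw [← Finset.sum_add_distrib, hsum2] at hsum
    exact hsum
  -- bound each term
  have hbound : |∑ ξ : Fin p → Bool, spin (ξ μ) * (Real.tanh (c * S ξ)
      - Real.tanh (c * (S ξ - 2 * m μ * spin (ξ μ))))| ≤ (2 : ℝ) ^ p * (2 * c * |m μ|) := by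
    calc |∑ ξ : Fin p → Bool, spin (ξ μ) * (Real.tanh (c * S ξ)
          - Real.tanh (c * (S ξ - 2 * m μ * spin (ξ μ))))|
        ≤ ∑ ξ : Fin p → Bool, |spin (ξ μ) * (Real.tanh (c * S ξ)
          - Real.tanh (c * (S ξ - 2 * m μ * spin (ξ μ))))| := Finset.abs_sum_le_sum_abs _ _
      _ ≤ ∑ _ξ : Fin p → Bool, 2 * c * |m μ| := by
          apply Finset.sum_le_sum
          intro ξ _
          rw [abs_mul, abs_spin, one_mul]
          calc |Real.tanh (c * S ξ) - Real.tanh (c * (S ξ - 2 * m μ * spin (ξ μ)))|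
              ≤ |c * S ξ - c * (S ξ - 2 * m μ * spin (ξ μ))| := tanh_lipschitz _ _
            _ = c * 2 * |m μ| * |spin (ξ μ)| := by
                rw [show c * S ξ - c * (S ξ - 2 * m μ * spin (ξ μ))
                    = c * 2 * (m μ * spin (ξ μ)) by ring]
                rw [abs_mul (c * 2) (m μ * spin (ξ μ)),
                  abs_of_nonneg (by linarith : (0:ℝ) ≤ c * 2), abs_mul]
                ring
            _ = 2 * c * |m μ| := by rw [abs_spin]; ring
      _ = (2 : ℝ) ^ p * (2 * c * |m μ|) := by
          rw [Finset.sum_const, Finset.card_univ, Fintype.card_fun, Fintype.card_bool,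
            Fintype.card_fin, nsmul_eq_mul]
          push_cast
          ring
  have hpow : (0 : ℝ) < (2 : ℝ) ^ p := by positivity
  have habs : |2 * m μ| ≤ 2 * c * |m μ| := by
    rw [hkey, abs_mul, abs_of_nonneg (inv_nonneg.mpr hpow.le)]
    calc ((2:ℝ)^p)⁻¹ * |∑ ξ : Fin p → Bool, spin (ξ μ) * (Real.tanh (c * S ξ)
          - Real.tanh (c * (S ξ - 2 * m μ * spin (ξ μ))))|
        ≤ ((2:ℝ)^p)⁻¹ * ((2 : ℝ) ^ p * (2 * c * |m μ|)) := by
          apply mul_le_mul_of_nonneg_left hbound (inv_nonneg.mpr hpow.le)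
      _ = 2 * c * |m μ| := by field_simp
  rw [abs_mul, abs_two] at habs
  have h5 : |m μ| ≤ c * |m μ| := by linarith
  have h6 : |m μ| ≤ 0 := by nlinarith [abs_nonneg (m μ)]
  exact abs_nonpos_iff.mp h6
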